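/- With the coherent oracle c𝔘 as defined in the context, let H := ℂ² ⊗ V ⊗ W and for 0 ≤ q ≤ N−1 let F_q ⊆ EuclideanSpace ℂ (Fin N) be the linear span of the Fourier basis vectors {k̂ : 0 ≤ k ≤ q}. Then for every 0 ≤ q ≤ N−2 and every unitary A on H, the operator (A ⊗ id) ∘ c𝔘 maps the subspace H ⊗ F_q into the subspace H ⊗ F_{q+1}. -/

import Mathlib

open scoped Kronecker

noncomputable section

/-- `ω N = exp(2πi/N)`, the primitive `N`-th root of unity. -/
def ω (N : ℕ) : ℂ := Complex.exp (2 * Real.pi * Complex.I / N)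

/-- The computational (standard) basis vector `e_y` of `EuclideanSpace ℂ (Fin N)`. -/
def e (N : ℕ) (y : Fin N) : EuclideanSpace ℂ (Fin N) := EuclideanSpace.single y 1

/-- The Fourier basis vector `k̂ = (1/√N) ∑_y ω_N^{k·y} • e_y`. -/
def fHat (N : ℕ) (k : Fin N) : EuclideanSpace ℂ (Fin N) :=
  (↑(Real.sqrt N))⁻¹ • ∑ y : Fin N, ω N ^ ((k : ℕ) * (y : ℕ)) • e N y

/-- The tensor product of two Euclidean vectors, realized concretely:
`(x ⊗ z) (i, j) = x i * z j`. -/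
def tp {ι κ : Type*} [Fintype ι] [Fintype κ]
    (x : EuclideanSpace ℂ ι) (z : EuclideanSpace ℂ κ) : EuclideanSpace ℂ (ι × κ) :=
  (EuclideanSpace.equiv (ι × κ) ℂ).symm fun p => x p.1 * z p.2

variable {ιV ιW : Type*} [Fintype ιV] [DecidableEq ιV] [Fintype ιW] [DecidableEq ιW]

/-- The matrix `|u⟩⟨u|` of the orthogonal projection `P_u` onto `ℂ ∙ u`
(for a unit vector `u`). -/
def PuM (u : EuclideanSpace ℂ ιV) : Matrix ιV ιV ℂ :=
  Matrix.of fun i j => u i * star (u j)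

/-- The matrix of `U_y = ω_N^y • P_u + (id - P_u)` on `V`. -/
def UyM (N : ℕ) (u : EuclideanSpace ℂ ιV) (y : Fin N) : Matrix ιV ιV ℂ :=
  ω N ^ (y : ℕ) • PuM u + (1 - PuM u)

/-- The matrix of the controlled unitary `cU_y = |0⟩⟨0| ⊗ id_V + |1⟩⟨1| ⊗ U_y` on `ℂ² ⊗ V`. -/
def cUyM (N : ℕ) (u : EuclideanSpace ℂ ιV) (y : Fin N) : Matrix (Fin 2 × ιV) (Fin 2 × ιV) ℂ :=
  Matrix.single 0 0 (1 : ℂ) ⊗ₖ (1 : Matrix ιV ιV ℂ)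
    + Matrix.single 1 1 (1 : ℂ) ⊗ₖ UyM N u y

/-- The matrix of the coherent oracle `c𝔘 = ∑_y (cU_y ⊗ id_W) ⊗ |e_y⟩⟨e_y|` on
`H ⊗ EuclideanSpace ℂ (Fin N)`, where `H = ℂ² ⊗ V ⊗ W`. -/
def oracleM (N : ℕ) (u : EuclideanSpace ℂ ιV) (ιW : Type*) [Fintype ιW] [DecidableEq ιW] :
    Matrix (((Fin 2 × ιV) × ιW) × Fin N) (((Fin 2 × ιV) × ιW) × Fin N) ℂ :=
  ∑ y : Fin N, (cUyM N u y ⊗ₖ (1 : Matrix ιW ιW ℂ)) ⊗ₖ Matrix.single y y (1 : ℂ)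

end

noncomputable section
namespace Stmt6Aux
open Matrix

lemma tp_apply {ι κ : Type*} [Fintype ι] [Fintype κ]
    (x : EuclideanSpace ℂ ι) (z : EuclideanSpace ℂ κ) (p : ι × κ) :
    tp x z p = x p.1 * z p.2 := rfl

lemma toEuc_apply {ι κ : Type*} [Fintype ι] [Fintype κ] [DecidableEq κ]
    (M : Matrix ι κ ℂ) (ψ : EuclideanSpace ℂ κ) (i : ι) :
    Matrix.toEuclideanLin M ψ i = M.mulVec ψ i := rfl

lemma fHat_apply {N : ℕ} (k j : Fin N) :
    fHat N k j = (Real.sqrt N : ℂ)⁻¹ * ω N ^ ((k:ℕ) * (j:ℕ)) := by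
  have hs : (∑ y : Fin N, ω N ^ ((k:ℕ)*(y:ℕ)) • e N y) j
      = ∑ y : Fin N, (ω N ^ ((k:ℕ)*(y:ℕ)) • e N y) j := by rw [WithLp.ofLp_sum]; exact Finset.sum_apply j Finset.univ _
  have h1 : fHat N k j
      = (Real.sqrt N : ℂ)⁻¹ * ((∑ y : Fin N, ω N ^ ((k:ℕ)*(y:ℕ)) • e N y) j) := by
    rw [fHat]; simp [PiLp.smul_apply, Complex.real_smul]
  rw [h1, hs]
  simp [e, EuclideanSpace.single_apply, smul_eq_mul, mul_ite, Finset.sum_ite_eq]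

variable {ιV ιW : Type*} [Fintype ιV] [DecidableEq ιV] [Fintype ιW] [DecidableEq ιW]

/-- The y-independent part of `cU_y`. -/
def DM (u : EuclideanSpace ℂ ιV) : Matrix (Fin 2 × ιV) (Fin 2 × ιV) ℂ :=
  Matrix.single 0 0 (1:ℂ) ⊗ₖ (1 : Matrix ιV ιV ℂ)
    + Matrix.single 1 1 (1:ℂ) ⊗ₖ ((1 : Matrix ιV ιV ℂ) - PuM u)

/-- The coefficient of `ω^y` in `cU_y`. -/
def CM (u : EuclideanSpace ℂ ιV) : Matrix (Fin 2 × ιV) (Fin 2 × ιV) ℂ :=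
  Matrix.single 1 1 (1:ℂ) ⊗ₖ PuM u

lemma cUyM_eq {N : ℕ} (u : EuclideanSpace ℂ ιV) (y : Fin N) :
    cUyM N u y = DM u + ω N ^ (y:ℕ) • CM u := by
  unfold cUyM UyM DM CM
  rw [Matrix.kronecker_add, Matrix.kronecker_smul, sub_eq_add_neg]
  abel

lemma oracleM_apply {N : ℕ} (u : EuclideanSpace ℂ ιV) (h h' : (Fin 2 × ιV) × ιW)
    (j j' : Fin N) :
    oracleM N u ιW (h, j) (h', j')
      = if j' = j then (cUyM N u j ⊗ₖ (1 : Matrix ιW ιW ℂ)) h h' else 0 := by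
  simp only [oracleM, Matrix.sum_apply, Matrix.kroneckerMap_apply, Matrix.single,
    Matrix.of_apply]
  rw [Finset.sum_eq_single j]
  · by_cases hjj : j' = j
    · simp [hjj]
    · simp [hjj, Ne.symm hjj]
  · intro y _ hy; simp [hy]
  · simp

lemma oracle_mulVec {N : ℕ} (u : EuclideanSpace ℂ ιV)
    (x : EuclideanSpace ℂ ((Fin 2 × ιV) × ιW)) (k : Fin N) (hk : (k:ℕ)+1 < N)
    (p : ((Fin 2 × ιV) × ιW) × Fin N) :
    (oracleM N u ιW).mulVec (tp x (fHat N k)) p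
      = ((DM u ⊗ₖ (1:Matrix ιW ιW ℂ)).mulVec x p.1) * fHat N k p.2
        + ((CM u ⊗ₖ (1:Matrix ιW ιW ℂ)).mulVec x p.1) * fHat N ⟨(k:ℕ)+1, hk⟩ p.2 := by
  obtain ⟨h, j⟩ := p
  have hK : cUyM N u j ⊗ₖ (1:Matrix ιW ιW ℂ)
      = DM u ⊗ₖ (1:Matrix ιW ιW ℂ) + ω N ^ (j:ℕ) • (CM u ⊗ₖ (1:Matrix ιW ιW ℂ)) := by
    rw [cUyM_eq, Matrix.add_kronecker, Matrix.smul_kronecker]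
  have hf : fHat N (⟨(k:ℕ)+1, hk⟩ : Fin N) j = ω N ^ (j:ℕ) * fHat N k j := by
    rw [fHat_apply, fHat_apply]
    show (Real.sqrt N : ℂ)⁻¹ * ω N ^ (((k:ℕ)+1) * (j:ℕ)) = _
    rw [show ((k:ℕ)+1) * (j:ℕ) = (k:ℕ)*(j:ℕ) + (j:ℕ) by ring, pow_add]
    ring
  have step1 : (oracleM N u ιW).mulVec (tp x (fHat N k)) (h, j)
      = ∑ h' : (Fin 2 × ιV) × ιW,
          (cUyM N u j ⊗ₖ (1:Matrix ιW ιW ℂ)) h h' * (x h' * fHat N k j) := by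
    rw [Matrix.mulVec]
    simp only [dotProduct, Fintype.sum_prod_type, tp_apply, oracleM_apply,
      ite_mul, zero_mul, Finset.sum_ite_eq', Finset.mem_univ, if_true]
  have step2 : ∀ (K : Matrix ((Fin 2 × ιV) × ιW) ((Fin 2 × ιV) × ιW) ℂ) (f : ℂ),
      (∑ h' : (Fin 2 × ιV) × ιW, K h h' * (x h' * f)) = K.mulVec x h * f := by
    intro K f
    rw [Matrix.mulVec, dotProduct, Finset.sum_mul]
    exact Finset.sum_congr rfl fun _ _ => by ring
  rw [step1, hK]
  simp only [Matrix.add_mulVec, Matrix.smul_mulVec, Pi.add_apply, Pi.smul_apply,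
    smul_eq_mul, hf]
  rw [← step2 (DM u ⊗ₖ (1:Matrix ιW ιW ℂ)) (fHat N k j),
    ← step2 (CM u ⊗ₖ (1:Matrix ιW ιW ℂ)) (ω N ^ (j:ℕ) * fHat N k j), ← Finset.sum_add_distrib]
  refine Finset.sum_congr rfl fun h' _ => ?_
  simp only [Matrix.add_apply, Pi.smul_apply, Matrix.smul_apply, smul_eq_mul]
  ring

lemma Akron_mulVec {N : ℕ} (A : Matrix ((Fin 2 × ιV) × ιW) ((Fin 2 × ιV) × ιW) ℂ)
    (v : ((Fin 2 × ιV) × ιW) → ℂ) (f : Fin N → ℂ) (p : ((Fin 2 × ιV) × ιW) × Fin N) :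
    (A ⊗ₖ (1 : Matrix (Fin N) (Fin N) ℂ)).mulVec (fun r => v r.1 * f r.2) p
      = A.mulVec v p.1 * f p.2 := by
  obtain ⟨h, j⟩ := p
  rw [Matrix.mulVec, dotProduct, Fintype.sum_prod_type]
  simp only [Matrix.kroneckerMap_apply, Matrix.one_apply, mul_ite, mul_one, mul_zero,
    ite_mul, zero_mul, Finset.sum_ite_eq, Finset.mem_univ, if_true]
  rw [Matrix.mulVec, dotProduct, Finset.sum_mul]
  exact Finset.sum_congr rfl fun _ _ => by ring

lemma key {N : ℕ} (u : EuclideanSpace ℂ ιV)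
    (A : Matrix ((Fin 2 × ιV) × ιW) ((Fin 2 × ιV) × ιW) ℂ)
    (x : EuclideanSpace ℂ ((Fin 2 × ιV) × ιW)) (k : Fin N) (hk : (k:ℕ)+1 < N) :
    Matrix.toEuclideanLin ((A ⊗ₖ (1 : Matrix (Fin N) (Fin N) ℂ)) * oracleM N u ιW)
        (tp x (fHat N k))
      = tp (Matrix.toEuclideanLin (A * (DM u ⊗ₖ (1:Matrix ιW ιW ℂ))) x) (fHat N k)
        + tp (Matrix.toEuclideanLin (A * (CM u ⊗ₖ (1:Matrix ιW ιW ℂ))) x)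
            (fHat N ⟨(k:ℕ)+1, hk⟩) := by
  have hOr : (oracleM N u ιW).mulVec (tp x (fHat N k))
      = fun r => (((DM u ⊗ₖ (1:Matrix ιW ιW ℂ)).mulVec x) r.1 * fHat N k r.2
        + ((CM u ⊗ₖ (1:Matrix ιW ιW ℂ)).mulVec x) r.1 * fHat N ⟨(k:ℕ)+1, hk⟩ r.2) :=
    funext fun p => oracle_mulVec u x k hk p
  ext p
  show ((A ⊗ₖ (1 : Matrix (Fin N) (Fin N) ℂ)) * oracleM N u ιW).mulVec (tp x (fHat N k)) p
    = (A * (DM u ⊗ₖ (1:Matrix ιW ιW ℂ))).mulVec x p.1 * fHat N k p.2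
      + (A * (CM u ⊗ₖ (1:Matrix ιW ιW ℂ))).mulVec x p.1 * fHat N ⟨(k:ℕ)+1, hk⟩ p.2
  rw [← Matrix.mulVec_mulVec, hOr]
  have : (fun r : ((Fin 2 × ιV) × ιW) × Fin N =>
        (((DM u ⊗ₖ (1:Matrix ιW ιW ℂ)).mulVec x) r.1 * fHat N k r.2
        + ((CM u ⊗ₖ (1:Matrix ιW ιW ℂ)).mulVec x) r.1 * fHat N ⟨(k:ℕ)+1, hk⟩ r.2))
      = (fun r => ((DM u ⊗ₖ (1:Matrix ιW ιW ℂ)).mulVec x) r.1 * fHat N k r.2)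
        + (fun r => ((CM u ⊗ₖ (1:Matrix ιW ιW ℂ)).mulVec x) r.1
            * fHat N ⟨(k:ℕ)+1, hk⟩ r.2) := rfl
  rw [this, Matrix.mulVec_add, Pi.add_apply, Akron_mulVec, Akron_mulVec,
    ← Matrix.mulVec_mulVec, ← Matrix.mulVec_mulVec]

end Stmt6Aux
end

noncomputable section

/-- With `H = ℂ² ⊗ V ⊗ W` and `F_q` the span of the Fourier basis vectors `k̂` with `k ≤ q`,
for every `0 ≤ q ≤ N-2` and every unitary `A` on `H`, the operator `(A ⊗ id) ∘ c𝔘` maps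
the subspace `H ⊗ F_q` into `H ⊗ F_{q+1}`. -/
theorem stmt_6 {ιV ιW : Type*} [Fintype ιV] [DecidableEq ιV] [Fintype ιW] [DecidableEq ιW]
    {N : ℕ} [NeZero N] (u : EuclideanSpace ℂ ιV) (hu : ‖u‖ = 1)
    {q : ℕ} (hq : q + 2 ≤ N)
    (A : Matrix ((Fin 2 × ιV) × ιW) ((Fin 2 × ιV) × ιW) ℂ)
    (hA : A ∈ Matrix.unitaryGroup ((Fin 2 × ιV) × ιW) ℂ)
    (ψ : EuclideanSpace ℂ (((Fin 2 × ιV) × ιW) × Fin N))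
    (hψ : ψ ∈ Submodule.span ℂ
      {z | ∃ (x : EuclideanSpace ℂ ((Fin 2 × ιV) × ιW)) (k : Fin N),
        (k : ℕ) ≤ q ∧ z = tp x (fHat N k)}) :
    Matrix.toEuclideanLin ((A ⊗ₖ (1 : Matrix (Fin N) (Fin N) ℂ)) * oracleM N u ιW) ψ
      ∈ Submodule.span ℂ
        {z | ∃ (x : EuclideanSpace ℂ ((Fin 2 × ιV) × ιW)) (k : Fin N),
          (k : ℕ) ≤ q + 1 ∧ z = tp x (fHat N k)} := by
  classical
  have hm : Matrix.toEuclideanLin ((A ⊗ₖ (1 : Matrix (Fin N) (Fin N) ℂ)) * oracleM N u ιW) ψ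
      ∈ Submodule.map
        (Matrix.toEuclideanLin ((A ⊗ₖ (1 : Matrix (Fin N) (Fin N) ℂ)) * oracleM N u ιW))
        (Submodule.span ℂ
          {z | ∃ (x : EuclideanSpace ℂ ((Fin 2 × ιV) × ιW)) (k : Fin N),
            (k : ℕ) ≤ q ∧ z = tp x (fHat N k)}) := Submodule.mem_map_of_mem hψ
  rw [Submodule.map_span] at hm
  refine Submodule.span_le.mpr ?_ hm
  rintro z ⟨w, ⟨x, k, hkq, rfl⟩, rfl⟩
  have hk : (k:ℕ) + 1 < N := by omega
  rw [Stmt6Aux.key u A x k hk]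
  exact Submodule.add_mem _
    (Submodule.subset_span ⟨_, k, by omega, rfl⟩)
    (Submodule.subset_span ⟨_, ⟨(k:ℕ)+1, hk⟩, by simpa using hkq, rfl⟩)


end
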